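/- Let γ : ℝ → ℝ^D be a C³ curve parametrized by arc length, i.e. ‖γ'(t)‖ = 1 for all t, set x = γ(0), and let V ⊆ ℝ^D be a linear subspace with γ'(0) ∈ V and γ''(0) ∈ V^⊥. Let n ∈ V^⊥ be a unit vector, let r > 0, set c = x + r n, and let π(y) = c + r (y − c)/‖y − c‖ denote the radial projection onto the sphere of center c and radius r. Let P denote the orthogonal projection of ℝ^D onto V. Then there exist constants C > 0 and ε > 0 such that for all s ∈ (0, ε), | ‖P(π(γ(s)) − x)‖ − s | ≤ C s³. -/

import Mathlib

set_option maxHeartbeats 4000000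

private lemma taylor3_aux {E : Type*} [NormedAddCommGroup E] [NormedSpace ℝ E]
    (f f1 f2 f3 : ℝ → E)
    (H : ∀ t, HasDerivAt f (f1 t) t) (H1 : ∀ t, HasDerivAt f1 (f2 t) t)
    (H2 : ∀ t, HasDerivAt f2 (f3 t) t)
    (h0 : f 0 = 0) (h10 : f1 0 = 0) (h20 : f2 0 = 0)
    (M : ℝ) (hM : 0 ≤ M) (hM3 : ∀ t ∈ Set.Icc (-1:ℝ) 1, ‖f3 t‖ ≤ M)
    (s : ℝ) (hs0 : 0 < s) (hs1 : s ≤ 1) : ‖f s‖ ≤ M * s ^ 3 := by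
  have hsub : Set.Icc (0 : ℝ) s ⊆ Set.Icc (-1 : ℝ) 1 := by
    intro t ht; exact ⟨by linarith [ht.1], by linarith [ht.2]⟩
  have hb2 : ∀ t ∈ Set.Icc (0 : ℝ) s, ‖f2 t‖ ≤ M * s := by
    intro t ht
    have := (convex_Icc (0 : ℝ) s).norm_image_sub_le_of_norm_hasDerivWithin_le
      (f := f2) (f' := f3) (fun u _ => (H2 u).hasDerivWithinAt)
      (fun u hu => hM3 u (hsub hu)) (Set.left_mem_Icc.mpr hs0.le) ht
    rw [h20, sub_zero, sub_zero, Real.norm_eq_abs, abs_of_nonneg ht.1] at this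
    calc ‖f2 t‖ ≤ M * t := this
      _ ≤ M * s := mul_le_mul_of_nonneg_left ht.2 hM
  have hb1 : ∀ t ∈ Set.Icc (0 : ℝ) s, ‖f1 t‖ ≤ M * s * s := by
    intro t ht
    have := (convex_Icc (0 : ℝ) s).norm_image_sub_le_of_norm_hasDerivWithin_le
      (f := f1) (f' := f2) (fun u _ => (H1 u).hasDerivWithinAt) hb2
      (Set.left_mem_Icc.mpr hs0.le) ht
    rw [h10, sub_zero, sub_zero, Real.norm_eq_abs, abs_of_nonneg ht.1] at this
    calc ‖f1 t‖ ≤ M * s * t := this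
      _ ≤ M * s * s := mul_le_mul_of_nonneg_left ht.2 (mul_nonneg hM hs0.le)
  have hb0 := (convex_Icc (0 : ℝ) s).norm_image_sub_le_of_norm_hasDerivWithin_le
    (f := f) (f' := f1) (fun u _ => (H u).hasDerivWithinAt) hb1
    (Set.left_mem_Icc.mpr hs0.le) (Set.right_mem_Icc.mpr hs0.le)
  rw [h0, sub_zero, sub_zero, Real.norm_eq_abs, abs_of_nonneg hs0.le] at hb0
  calc ‖f s‖ ≤ M * s * s * s := hb0
    _ = M * s ^ 3 := by ring



/-- Statement (iii) in the proof of Theorem 4 of the paper: radially projecting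
`γ(s)` onto the approximating sphere `S_x(c, r)` (passing through `x = γ(0)`,
tangent to `V` at `x`, with center `c = x + r n`, `n ∈ Vឮ` a unit vector) and then
orthogonally projecting onto `V` yields a Euclidean distance to `x` estimating the
arc length `s` with third-order error. -/
theorem stmt_10 {D : ℕ} (γ : ℝ → EuclideanSpace ℝ (Fin D))
    (hγ : ContDiff ℝ 3 γ)
    (hunit : ∀ t : ℝ, ‖deriv γ t‖ = 1)
    (x : EuclideanSpace ℝ (Fin D)) (hx : x = γ 0)
    (V : Submodule ℝ (EuclideanSpace ℝ (Fin D)))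
    (htan : deriv γ 0 ∈ V) (hnor : deriv (deriv γ) 0 ∈ Vᗮ)
    (n : EuclideanSpace ℝ (Fin D)) (hnV : n ∈ Vᗮ) (hn : ‖n‖ = 1)
    (r : ℝ) (hr : 0 < r)
    (c : EuclideanSpace ℝ (Fin D)) (hc : c = x + r • n)
    (π : EuclideanSpace ℝ (Fin D) → EuclideanSpace ℝ (Fin D))
    (hπ : ∀ z, π z = c + (r / ‖z - c‖) • (z - c)) :
    ∃ C > (0 : ℝ), ∃ ε > (0 : ℝ), ∀ s ∈ Set.Ioo (0 : ℝ) ε,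
      |‖(V.orthogonalProjection (π (γ s) - x) : EuclideanSpace ℝ (Fin D))‖ - s|
        ≤ C * s ^ 3 := by
  have hγ1 : Differentiable ℝ γ := hγ.differentiable (by norm_num)
  have hd1 : ContDiff ℝ 2 (deriv γ) :=
    (contDiff_succ_iff_deriv.mp ((by norm_num : (3 : WithTop ℕ∞) = 2 + 1) ▸ hγ)).2.2
  have hd2 : ContDiff ℝ 1 (deriv (deriv γ)) :=
    (contDiff_succ_iff_deriv.mp ((by norm_num : (2 : WithTop ℕ∞) = 1 + 1) ▸ hd1)).2.2
  have hγ'1 : Differentiable ℝ (deriv γ) := hd1.differentiable (by norm_num)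
  have hγ''1 : Differentiable ℝ (deriv (deriv γ)) := hd2.differentiable (by norm_num)
  have hc3 : Continuous (deriv (deriv (deriv γ))) := hd2.continuous_deriv le_rfl
  set T := deriv γ 0 with hT
  set N := deriv (deriv γ) 0 with hN
  set h : ℝ → EuclideanSpace ℝ (Fin D) :=
    fun t => γ t - γ 0 - t • T - (t ^ 2 / 2) • N with hh
  set h₁ : ℝ → EuclideanSpace ℝ (Fin D) := fun t => deriv γ t - T - t • N with hh₁
  set h₂ : ℝ → EuclideanSpace ℝ (Fin D) := fun t => deriv (deriv γ) t - N with hh₂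
  have Hh : ∀ t, HasDerivAt h (h₁ t) t := by
    intro t
    have d1 : HasDerivAt (fun t : ℝ => t • T) ((1 : ℝ) • T) t := (hasDerivAt_id t).smul_const T
    have d0 : HasDerivAt (fun t : ℝ => t ^ 2 / 2) t t := by
      simpa using (hasDerivAt_pow 2 t).div_const 2
    have d2 : HasDerivAt (fun t : ℝ => (t ^ 2 / 2) • N) (t • N) t := d0.smul_const N
    simpa [hh, hh₁, one_smul, Pi.sub_def] using (((hγ1 t).hasDerivAt.sub_const (γ 0)).sub d1).sub d2
  have Hh₁ : ∀ t, HasDerivAt h₁ (h₂ t) t := by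
    intro t
    have d1 : HasDerivAt (fun t : ℝ => t • N) ((1 : ℝ) • N) t := (hasDerivAt_id t).smul_const N
    simpa [hh₁, hh₂, one_smul, Pi.sub_def] using (((hγ'1 t).hasDerivAt.sub_const T).sub d1)
  have Hh₂ : ∀ t, HasDerivAt h₂ (deriv (deriv (deriv γ)) t) t := by
    intro t
    simpa [hh₂] using ((hγ''1 t).hasDerivAt.sub_const N)
  obtain ⟨M0, hM0⟩ := (isCompact_Icc (a := (-1 : ℝ)) (b := 1)).exists_bound_of_continuousOn
    hc3.continuousOn
  obtain ⟨M, hMdef⟩ : ∃ y : ℝ, y = max M0 0 := ⟨_, rfl⟩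
  have hM : 0 ≤ M := hMdef ▸ le_max_right _ _
  have hM3 : ∀ t ∈ Set.Icc (-1 : ℝ) 1, ‖deriv (deriv (deriv γ)) t‖ ≤ M :=
    fun t ht => le_trans (hM0 t ht) (hMdef ▸ le_max_left _ _)
  have key : ∀ s : ℝ, 0 < s → s ≤ 1 → ‖h s‖ ≤ M * s ^ 3 :=
    taylor3_aux h h₁ h₂ (fun t => deriv (deriv (deriv γ)) t) Hh Hh₁ Hh₂
      (by simp [hh]) (by simp [hh₁, hT]) (by simp [hh₂, hN]) M hM hM3
  -- projection facts
  have hPT : ((V.orthogonalProjection T : EuclideanSpace ℝ (Fin D))) = T :=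
    Submodule.starProjection_eq_self_iff.mpr htan
  have hPN : V.orthogonalProjection N = 0 :=
    Submodule.orthogonalProjectionOnto_apply_of_mem_orthogonal hnor
  have hPn : V.orthogonalProjection n = 0 :=
    Submodule.orthogonalProjectionOnto_apply_of_mem_orthogonal hnV
  have hPle : ∀ z, ‖(V.orthogonalProjection z : EuclideanSpace ℝ (Fin D))‖ ≤ ‖z‖ := by
    intro z
    simpa using V.orthogonalProjection.le_of_opNorm_le (Submodule.orthogonalProjectionOnto_norm_le (K := V)) z
  have hTn : (inner ℝ T n : ℝ) = 0 := Submodule.inner_right_of_mem_orthogonal htan hnV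
  -- constants
  obtain ⟨C₂, hC₂def⟩ : ∃ y : ℝ, y = ‖N‖ / 2 + M + 1 / (2 * r) := ⟨_, rfl⟩
  have hC₂pos : 0 < C₂ := by rw [hC₂def]; positivity
  obtain ⟨C, hCdef⟩ : ∃ y : ℝ, y = 2 * M + 2 * C₂ / r + 1 := ⟨_, rfl⟩
  have hCpos : 0 < C := by rw [hCdef]; positivity
  refine ⟨C, hCpos, min 1 (r / (2 * (C₂ + 1))), by positivity, ?_⟩
  rintro s ⟨hs0, hsε⟩
  have hs1 : s ≤ 1 := le_trans hsε.le (min_le_left _ _)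
  have hs2 : s ≤ r / (2 * (C₂ + 1)) := le_trans hsε.le (min_le_right _ _)
  have hssq : s ^ 2 ≤ s := by nlinarith
  -- decomposition
  have hdecomp : γ s - x = s • T + (s ^ 2 / 2) • N + h s := by
    rw [hx, hh]; module
  have hPγ : (V.orthogonalProjection (γ s - x) : EuclideanSpace ℝ (Fin D))
      = s • T + (V.orthogonalProjection (h s) : EuclideanSpace ℝ (Fin D)) := by
    rw [hdecomp]
    simp [map_add, map_smul, hPN, hPT]
  set A : ℝ := ‖(V.orthogonalProjection (γ s - x) : EuclideanSpace ℝ (Fin D))‖ with hAdef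
  have hsT : ‖s • T‖ = s := by
    rw [norm_smul, hunit 0, Real.norm_eq_abs, abs_of_pos hs0, mul_one]
  have hA : |A - s| ≤ M * s ^ 3 := by
    have h1 : ‖(V.orthogonalProjection (γ s - x) : EuclideanSpace ℝ (Fin D)) - s • T‖
        ≤ M * s ^ 3 := by
      rw [hPγ]
      simpa using le_trans (hPle (h s)) (key s hs0 hs1)
    calc |A - s| = |A - ‖s • T‖| := by rw [hsT]
      _ ≤ ‖(V.orthogonalProjection (γ s - x) : EuclideanSpace ℝ (Fin D)) - s • T‖ :=
        abs_norm_sub_norm_le _ _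
      _ ≤ M * s ^ 3 := h1
  set B : ℝ := ‖γ s - c‖ with hBdef
  have hKdecomp : γ s - c = (s • T - r • n) + ((s ^ 2 / 2) • N + h s) := by
    rw [hc, hx, hh]; module
  have hK2 : ‖s • T - r • n‖ ^ 2 = s ^ 2 + r ^ 2 := by
    rw [norm_sub_sq_real, real_inner_smul_left, real_inner_smul_right, hTn, norm_smul,
      norm_smul, hunit 0, hn, Real.norm_eq_abs, Real.norm_eq_abs, abs_of_pos hs0,
      abs_of_pos hr]
    ring
  have hKnn := norm_nonneg (s • T - r • n)
  have hKub : ‖s • T - r • n‖ ≤ r + s ^ 2 / (2 * r) := by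
    have e : 2 * r * (s ^ 2 / (2 * r)) = s ^ 2 := by field_simp
    have hu : (0:ℝ) ≤ s ^ 2 / (2 * r) := by positivity
    nlinarith [hK2, sq_nonneg (s ^ 2 / (2 * r)), e, hKnn, hu, hr]
  have hKlb : r ≤ ‖s • T - r • n‖ := by nlinarith [hK2]
  have hrest : ‖(s ^ 2 / 2) • N + h s‖ ≤ (‖N‖ / 2 + M) * s ^ 2 := by
    calc ‖(s ^ 2 / 2) • N + h s‖ ≤ ‖(s ^ 2 / 2) • N‖ + ‖h s‖ := norm_add_le _ _
      _ ≤ (s ^ 2 / 2) * ‖N‖ + M * s ^ 3 := by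
          rw [norm_smul, Real.norm_eq_abs, abs_of_nonneg (by positivity)]
          exact add_le_add le_rfl (key s hs0 hs1)
      _ ≤ (‖N‖ / 2 + M) * s ^ 2 := by
          have h32 : s ^ 3 ≤ s ^ 2 := by nlinarith [sq_nonneg s]
          have := mul_le_mul_of_nonneg_left h32 hM
          linarith
  have hBK : |B - ‖s • T - r • n‖| ≤ (‖N‖ / 2 + M) * s ^ 2 := by
    calc |B - ‖s • T - r • n‖| ≤ ‖(γ s - c) - (s • T - r • n)‖ := abs_norm_sub_norm_le _ _
      _ = ‖(s ^ 2 / 2) • N + h s‖ := by rw [hKdecomp]; congr 1; abel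
      _ ≤ (‖N‖ / 2 + M) * s ^ 2 := hrest
  have hBub : B ≤ r + C₂ * s ^ 2 := by
    have h2 := (abs_le.mp hBK).2
    have h10 : C₂ * s ^ 2 = (‖N‖ / 2 + M) * s ^ 2 + 1 / (2 * r) * s ^ 2 := by
      rw [hC₂def]; ring
    have h11 : s ^ 2 / (2 * r) = 1 / (2 * r) * s ^ 2 := by ring
    linarith [hKub]
  have hBlb : r - C₂ * s ^ 2 ≤ B := by
    have h1 := (abs_le.mp hBK).1
    have h9 : (0:ℝ) ≤ 1 / (2 * r) * s ^ 2 := by positivity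
    have h10 : C₂ * s ^ 2 = (‖N‖ / 2 + M) * s ^ 2 + 1 / (2 * r) * s ^ 2 := by
      rw [hC₂def]; ring
    linarith [hKlb]
  have hBhalf : r / 2 ≤ B := by
    have h1 : C₂ * s ^ 2 ≤ C₂ * s := mul_le_mul_of_nonneg_left hssq hC₂pos.le
    have h2 : s * (2 * (C₂ + 1)) ≤ r := (le_div_iff₀ (by positivity)).mp hs2
    nlinarith [hs0, hC₂pos]
  have hBpos : 0 < B := by linarith
  -- projection identity
  have e0 : π (γ s) = c + (r / B) • (γ s - c) := by rw [hπ (γ s), hBdef]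
  have e1 : π (γ s) - x = r • n + (r / B) • (γ s - c) := by
    rw [e0, hc]; abel
  have e2 : γ s - c = (γ s - x) + (-r) • n := by
    rw [hc]; module
  have hπγ : (V.orthogonalProjection (π (γ s) - x) : EuclideanSpace ℝ (Fin D))
      = (r / B) • (V.orthogonalProjection (γ s - x) : EuclideanSpace ℝ (Fin D)) := by
    rw [e1, e2]
    simp [map_add, map_smul, hPn, smul_add, smul_smul]
  rw [hπγ, norm_smul, Real.norm_eq_abs, abs_of_pos (by positivity : (0:ℝ) < r / B), ← hAdef]
  -- final arithmetic
  have hBne : B ≠ 0 := ne_of_gt hBpos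
  have hEq : r / B * A - s = (r * (A - s) - s * (B - r)) / B := by
    field_simp; ring
  rw [hEq, abs_div, abs_of_pos hBpos, div_le_iff₀ hBpos]
  have hBabs : |B - r| ≤ C₂ * s ^ 2 := abs_le.mpr ⟨by linarith, by linarith⟩
  have hnum : |r * (A - s) - s * (B - r)| ≤ M * r * s ^ 3 + C₂ * s ^ 3 := by
    calc |r * (A - s) - s * (B - r)| ≤ |r * (A - s)| + |s * (B - r)| := abs_sub _ _
      _ = r * |A - s| + s * |B - r| := by
          rw [abs_mul, abs_mul, abs_of_pos hr, abs_of_pos hs0]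
      _ ≤ r * (M * s ^ 3) + s * (C₂ * s ^ 2) := by
          have := mul_le_mul_of_nonneg_left hA hr.le
          have := mul_le_mul_of_nonneg_left hBabs hs0.le
          linarith
      _ = M * r * s ^ 3 + C₂ * s ^ 3 := by ring
  have hCr : C * r = 2 * M * r + 2 * C₂ + r := by
    rw [hCdef]; field_simp
  have hs3 : (0:ℝ) < s ^ 3 := by positivity
  have h5 : C * s ^ 3 * (r / 2) ≤ C * s ^ 3 * B :=
    mul_le_mul_of_nonneg_left hBhalf (by positivity)
  have h6 : M * r * s ^ 3 + C₂ * s ^ 3 ≤ C * s ^ 3 * (r / 2) := by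
    have e : C * s ^ 3 * (r / 2) = (C * r) * s ^ 3 / 2 := by ring
    rw [e, hCr]
    nlinarith [mul_pos hs3 hr]
  linarith [hnum, h5, h6]
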